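/- Let E/F be an unramified quadratic extension of p-adic fields with p odd, written E = F(δ) with δ² = Δ ∈ O_F^× \ (F^×)². Then the set {1 + ϖ_F δ x : x ∈ O_F} is a complete set of representatives for the quotient group (1 + p_E)/(1 + p_F), i.e. the map x ↦ (1 + ϖ_F δ x)(1 + p_F) is a bijection from O_F onto (1 + p_E)/(1 + p_F). -/

import Mathlib

lemma stmt1_aux_lt_one {K : Type*} [Field K] (A : ValuationSubring K) (x : K) (hx : x ≠ 0) :
    A.valuation x < 1 ↔ x ∈ A ∧ x⁻¹ ∉ A := by
  constructor
  · intro h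
    refine ⟨A.mem_of_valuation_le_one x h.le, fun hc => ?_⟩
    have h1 : A.valuation x⁻¹ ≤ 1 := (A.valuation_le_one_iff _).2 hc
    have h2 : A.valuation x * A.valuation x⁻¹ = 1 := by
      rw [← map_mul, mul_inv_cancel₀ hx, map_one]
    have h3 : (1 : A.ValueGroup) ≤ A.valuation x := by
      calc (1 : A.ValueGroup) = A.valuation x * A.valuation x⁻¹ := h2.symm
        _ ≤ A.valuation x * 1 := mul_le_mul_right h1 _
        _ = A.valuation x := mul_one _
    exact absurd h (not_lt.mpr h3)
  · rintro ⟨h1, h2⟩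
    rcases lt_or_eq_of_le ((A.valuation_le_one_iff _).2 h1) with h | h
    · exact h
    · exact absurd ((A.valuation_le_one_iff _).1 (by rw [map_inv₀, h, inv_one])) h2

/-- Let `E/F` be an unramified quadratic extension of `p`-adic fields with `p`
odd, written `E = F(δ)` with `δ² = Δ ∈ O_F^× \ (F^×)²` (and `O_E = O_F[δ]`).  Then the set
`{1 + ϖ_F δ x : x ∈ O_F}` is a complete set of representatives for `(1 + p_E)/(1 + p_F)`:
for every `u ∈ 1 + p_E` there is a unique `x ∈ O_F` with `(1 + ϖ_F δ x)(1 + p_F) = u(1 + p_F)`. -/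
theorem stmt_1 {p : ℕ} (hp : p.Prime) (hp2 : p ≠ 2)
    {F E : Type*} [Field F] [Field E] [Algebra F E]
    (hdim : Module.finrank F E = 2)
    (OF : ValuationSubring F) (OE : ValuationSubring E)
    [IsDomain OF] [IsDiscreteValuationRing OF]
    (hpF : OF.valuation (p : F) < 1)
    (δ : E) (Δ : OF) (hδ : δ ^ 2 = algebraMap F E (Δ : F))
    (hΔu : IsUnit Δ) (hΔns : ¬ IsSquare ((Δ : F)))
    (hOE : ∀ z : E, z ∈ OE ↔ ∃ a b : OF,
      z = algebraMap F E (a : F) + algebraMap F E (b : F) * δ)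
    (ϖ : OF) (hϖ : Irreducible ϖ) :
    ∀ u : E, OE.valuation (u - 1) < 1 →
      ∃! x : OF, ∃ f : F, OF.valuation (f - 1) < 1 ∧
        u = (1 + algebraMap F E ((ϖ : F)) * δ * algebraMap F E ((x : F)))
              * algebraMap F E f := by
  set ι := algebraMap F E with hι
  have ιinj : Function.Injective ι := (algebraMap F E).injective
  -- uniqueness of representation a + b δ
  have uniq : ∀ s t s' t' : F, ι s + ι t * δ = ι s' + ι t' * δ → s = s' ∧ t = t' := by
    intro s t s' t' h
    by_cases ht : t = t'
    · subst ht
      exact ⟨ιinj (add_right_cancel h), rfl⟩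
    · exfalso
      have hne : (t' - t) ≠ 0 := sub_ne_zero.mpr (Ne.symm ht)
      have h2 : ι (s - s') = ι (t' - t) * δ := by
        rw [map_sub, map_sub]; linear_combination h
      have h3 : ι ((s - s')^2) = ι ((t'-t)^2 * Δ) := by
        rw [map_mul, map_pow, map_pow, h2, ← hδ]; ring
      have h4 : (s-s')^2 = (t'-t)^2 * (Δ:F) := ιinj h3
      apply hΔns
      refine ⟨(s-s')/(t'-t), ?_⟩
      field_simp
      linear_combination -h4
  -- F ∩ OE = OF
  have memF : ∀ f : F, ι f ∈ OE ↔ f ∈ OF := by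
    intro f
    constructor
    · intro h
      obtain ⟨a, b, hab⟩ := (hOE _).1 h
      have h0 : ι f + ι 0 * δ = ι (a:F) + ι (b:F) * δ := by
        rw [map_zero, zero_mul, add_zero]; exact hab
      have := (uniq f 0 (a:F) (b:F) h0).1
      rw [this]; exact a.2
    · intro h
      exact (hOE _).2 ⟨⟨f, h⟩, 0, by simp⟩
  -- transfer of "valuation < 1" along ι
  have ltF : ∀ f : F, OE.valuation (ι f) < 1 ↔ OF.valuation f < 1 := by
    intro f
    rcases eq_or_ne f 0 with rfl | hf
    · simp only [map_zero]
      exact iff_of_true zero_lt_one zero_lt_one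
    · have hf' : ι f ≠ 0 := fun h => hf (ιinj (h.trans (map_zero ι).symm))
      rw [stmt1_aux_lt_one OE _ hf', stmt1_aux_lt_one OF _ hf, ← map_inv₀ ι, memF, memF]
  have hΔv : OF.valuation (Δ:F) = 1 := (OF.valuation_eq_one_iff Δ).1 hΔu
  -- 2 is a unit of OF
  have two_unit : IsUnit (2 : OF) := by
    obtain ⟨k, hk⟩ := hp.odd_of_ne_two hp2
    have h2le : OF.valuation (2 : F) ≤ 1 := by
      rw [OF.valuation_le_one_iff]
      rw [show (2:F) = ((2:OF):F) by norm_cast]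
      exact (2:OF).2
    have hkle : OF.valuation ((k : ℕ) : F) ≤ 1 := by
      rw [OF.valuation_le_one_iff]
      rw [show ((k:ℕ):F) = (((k:ℕ):OF):F) by norm_cast]
      exact ((k:ℕ):OF).2
    have h2eq : OF.valuation (2 : F) = 1 := by
      rcases lt_or_eq_of_le h2le with h | h
      · exfalso
        have h2k : OF.valuation (2 * (k : F)) < 1 := by
          calc OF.valuation (2 * (k : F)) = OF.valuation (2:F) * OF.valuation ((k:ℕ) : F) :=
                map_mul _ _ _
            _ ≤ OF.valuation (2:F) * 1 := mul_le_mul_right hkle _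
            _ = OF.valuation (2:F) := mul_one _
            _ < 1 := h
        have hpk : (p : F) = 2 * (k : F) + 1 := by exact_mod_cast congrArg (fun n : ℕ => (n : F)) hk
        have hone : (1 : F) = (p : F) - 2 * (k : F) := by linear_combination -hpk
        have : OF.valuation (1 : F) < 1 := by
          rw [hone]
          calc OF.valuation ((p : F) - 2 * (k : F))
              ≤ max (OF.valuation (p : F)) (OF.valuation (2 * (k : F))) := Valuation.map_sub _ _ _
            _ < 1 := max_lt hpF h2k
        rw [map_one] at this
        exact absurd this (lt_irrefl 1)
      · exact h
    rw [OF.valuation_eq_one_iff]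
    rw [show ((2:OF):F) = (2:F) by norm_cast, h2eq]
  -- Δ is a non-square modulo the maximal ideal
  have NS : ∀ c : OF, ¬ OF.valuation ((Δ:F) - (c:F)^2) < 1 := by
    intro c hc
    set d : F := (Δ:F) - (c:F)^2 with hd
    have hd0 : d ≠ 0 := by
      intro h
      apply hΔns
      refine ⟨(c:F), ?_⟩
      rw [hd] at h
      linear_combination h
    have hdE : ι d ≠ 0 := fun h => hd0 (ιinj (h.trans (map_zero ι).symm))
    have hcu : OF.valuation (c:F) = 1 := by
      by_contra h
      have hclt : OF.valuation (c:F) < 1 :=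
        lt_of_le_of_ne (OF.valuation_le_one c) h
      have hc2 : OF.valuation ((c:F)^2) < 1 := by
        rw [map_pow, sq]
        calc OF.valuation (c:F) * OF.valuation (c:F)
            ≤ 1 * OF.valuation (c:F) := mul_le_mul_left hclt.le _
          _ = OF.valuation (c:F) := one_mul _
          _ < 1 := hclt
      have : OF.valuation (Δ:F) < 1 := by
        rw [show (Δ:F) = d + (c:F)^2 by rw [hd]; ring]
        exact lt_of_le_of_lt (OF.valuation.map_add _ _) (max_lt hc hc2)
      rw [hΔv] at this
      exact absurd this (lt_irrefl 1)
    have h2c : IsUnit (2 * c : OF) := two_unit.mul ((OF.valuation_eq_one_iff c).2 hcu)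
    have hmem₁ : δ - ι (c:F) ∈ OE := (hOE _).2 ⟨-c, 1, by push_cast [map_neg, map_one]; ring⟩
    have hmem₂ : δ + ι (c:F) ∈ OE := (hOE _).2 ⟨c, 1, by push_cast [map_one]; ring⟩
    have hdinv : (d⁻¹ : F) ∉ OF := ((stmt1_aux_lt_one OF d hd0).1 hc).2
    have notin : ∀ w : F, ι w + ι d⁻¹ * δ ∉ OE := by
      intro w hw
      obtain ⟨a', b', hab'⟩ := (hOE _).1 hw
      have := (uniq w d⁻¹ (a':F) (b':F) hab').2
      exact hdinv (this ▸ b'.2)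
    have hinv₁ : (δ - ι (c:F))⁻¹ ∉ OE := by
      have hmul : (ι ((c:F) * d⁻¹) + ι d⁻¹ * δ) * (δ - ι (c:F)) = 1 := by
        have step : (ι ((c:F) * d⁻¹) + ι d⁻¹ * δ) * (δ - ι (c:F))
            = ι d⁻¹ * (δ^2 - ι ((c:F)^2)) := by
          rw [map_mul, map_pow]; ring
        rw [step, hδ, ← map_sub, ← hd, ← map_mul, inv_mul_cancel₀ hd0, map_one]
      rw [(eq_inv_of_mul_eq_one_left hmul).symm]
      exact notin _
    have hinv₂ : (δ + ι (c:F))⁻¹ ∉ OE := by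
      have hmul : (ι (-(c:F) * d⁻¹) + ι d⁻¹ * δ) * (δ + ι (c:F)) = 1 := by
        have step : (ι (-(c:F) * d⁻¹) + ι d⁻¹ * δ) * (δ + ι (c:F))
            = ι d⁻¹ * (δ^2 - ι ((c:F)^2)) := by
          rw [map_mul, map_pow, map_neg]; ring
        rw [step, hδ, ← map_sub, ← hd, ← map_mul, inv_mul_cancel₀ hd0, map_one]
      rw [(eq_inv_of_mul_eq_one_left hmul).symm]
      exact notin _
    have hnu : ∀ X : OE, ((X : E))⁻¹ ∉ OE → ¬ IsUnit X := by
      intro X hX hu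
      obtain ⟨v, hv⟩ := hu.exists_right_inv
      apply hX
      have hve : (X : E) * (v : E) = 1 := by exact_mod_cast congrArg (fun z : OE => (z : E)) hv
      rw [inv_eq_of_mul_eq_one_right hve]
      exact v.2
    have m₁ : (⟨δ - ι (c:F), hmem₁⟩ : OE) ∈ IsLocalRing.maximalIdeal OE :=
      (IsLocalRing.mem_maximalIdeal _).mpr (hnu _ hinv₁)
    have m₂ : (⟨δ + ι (c:F), hmem₂⟩ : OE) ∈ IsLocalRing.maximalIdeal OE :=
      (IsLocalRing.mem_maximalIdeal _).mpr (hnu _ hinv₂)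
    have m₃ : (⟨δ + ι (c:F), hmem₂⟩ - ⟨δ - ι (c:F), hmem₁⟩ : OE) ∈ IsLocalRing.maximalIdeal OE :=
      Ideal.sub_mem _ m₂ m₁
    obtain ⟨e, he⟩ := h2c.exists_right_inv
    have hemem : ι ((e:F)) ∈ OE := (memF _).2 e.2
    have hXe : ((⟨δ + ι (c:F), hmem₂⟩ - ⟨δ - ι (c:F), hmem₁⟩ : OE)) * ⟨ι (e:F), hemem⟩ = 1 := by
      apply Subtype.ext
      have hcoe : (((⟨δ + ι (c:F), hmem₂⟩ - ⟨δ - ι (c:F), hmem₁⟩ : OE)) : E) = ι ((2*c : OF) : F) := by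
        have h2F : ((2*c : OF) : F) = 2 * (c:F) := by push_cast; norm_cast
        rw [h2F, map_mul, map_ofNat]
        push_cast
        ring
      show (((⟨δ + ι (c:F), hmem₂⟩ - ⟨δ - ι (c:F), hmem₁⟩ : OE)) : E) * ι (e:F) = 1
      rw [hcoe, ← map_mul]
      have : ((2*c : OF) : F) * (e : F) = 1 := by exact_mod_cast congrArg (fun z : OF => (z : F)) he
      rw [this, map_one]
    exact (mem_nonunits_iff.mp ((IsLocalRing.mem_maximalIdeal _).mp m₃)) (IsUnit.of_mul_eq_one _ hXe)
  -- main argument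
  intro u hu
  have huOE : u ∈ OE := by
    have h1 : u - 1 ∈ OE := OE.mem_of_valuation_le_one _ hu.le
    rw [show u = (u - 1) + 1 by ring]
    exact add_mem h1 (one_mem OE)
  obtain ⟨a, b, hab⟩ := (hOE u).1 huOE
  set s : F := (a:F) with hs
  set t : F := (b:F) with hts
  have hn : OF.valuation ((s-1)^2 - (Δ:F)*t^2) < 1 := by
    rw [← ltF]
    have hW : ι (s-1) - ι t * δ ∈ OE := (hOE _).2 ⟨a - 1, -b, by push_cast [map_sub, map_neg, map_one]; ring⟩
    have key : ι ((s-1)^2 - (Δ:F)*t^2) = (u - 1) * (ι (s-1) - ι t * δ) := by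
      rw [map_sub, map_mul, map_pow, map_pow, map_sub, map_one]
      linear_combination -(ι s - 1 - ι t * δ) * hab + (ι t) ^ 2 * hδ
    rw [key]
    calc OE.valuation ((u - 1) * (ι (s-1) - ι t * δ))
        = OE.valuation (u - 1) * OE.valuation (ι (s-1) - ι t * δ) := map_mul _ _ _
      _ ≤ OE.valuation (u - 1) * 1 := mul_le_mul_right ((OE.valuation_le_one_iff _).2 hW) _
      _ = OE.valuation (u - 1) := mul_one _
      _ < 1 := hu
  have hb : OF.valuation t < 1 := by
    by_contra hbv
    have hbv1 : OF.valuation t = 1 := (OF.valuation_lt_one_or_eq_one b).resolve_left hbv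
    have hci : (s-1)/t ∈ OF := by
      rw [← OF.valuation_le_one_iff, map_div₀, hbv1, div_one, OF.valuation_le_one_iff]
      exact sub_mem a.2 (one_mem OF)
    apply NS ⟨(s-1)/t, hci⟩
    show OF.valuation ((Δ:F) - ((s-1)/t)^2) < 1
    have ht0 : t ≠ 0 := by
      intro h
      rw [h, map_zero] at hbv1
      exact zero_ne_one hbv1
    have heq : (Δ:F) - ((s-1)/t)^2 = -(((s-1)^2 - (Δ:F)*t^2)) / t^2 := by
      field_simp
      ring
    rw [heq, map_div₀, Valuation.map_neg, map_pow, hbv1, one_pow, div_one]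
    exact hn
  have ha : OF.valuation (s - 1) < 1 := by
    have h1 : OF.valuation ((Δ:F) * t^2) < 1 := by
      rw [map_mul, map_pow, hΔv, one_mul, sq]
      calc OF.valuation t * OF.valuation t
          ≤ 1 * OF.valuation t := mul_le_mul_left hb.le _
        _ = OF.valuation t := one_mul _
        _ < 1 := hb
    have h2 : OF.valuation ((s-1)^2) < 1 := by
      rw [show (s-1)^2 = ((s-1)^2 - (Δ:F)*t^2) + (Δ:F)*t^2 by ring]
      exact lt_of_le_of_lt (OF.valuation.map_add _ _) (max_lt hn h1)
    by_contra hc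
    push_neg at hc
    have : (1 : OF.ValueGroup) ≤ OF.valuation ((s-1)^2) := by
      rw [map_pow, sq]
      calc (1 : OF.ValueGroup) = 1 * 1 := (one_mul _).symm
        _ ≤ OF.valuation (s-1) * OF.valuation (s-1) := mul_le_mul' hc hc
    exact absurd h2 (not_lt.mpr this)
  have hs1 : OF.valuation s = 1 := by
    rw [show s = 1 + (s - 1) by ring]
    exact Valuation.map_one_add_of_lt _ ha
  have hs0 : s ≠ 0 := by
    intro h
    rw [h, map_zero] at hs1
    exact zero_ne_one hs1
  have hsiv : s⁻¹ ∈ OF := by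
    rw [← OF.valuation_le_one_iff, map_inv₀, hs1, inv_one]
  set y : OF := b * ⟨s⁻¹, hsiv⟩ with hy
  have hyv : OF.valuation ((y : OF) : F) < 1 := by
    have : ((y : OF) : F) = t * s⁻¹ := by rw [hy]; push_cast; ring
    rw [this, map_mul, map_inv₀, hs1, inv_one, mul_one]
    exact hb
  have hynu : ¬ IsUnit y := by
    intro h
    rw [(OF.valuation_eq_one_iff y).1 h] at hyv
    exact absurd hyv (lt_irrefl 1)
  have hym : y ∈ Ideal.span ({ϖ} : Set OF) := by
    rw [← hϖ.maximalIdeal_eq]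
    exact (IsLocalRing.mem_maximalIdeal _).mpr hynu
  obtain ⟨x, hx⟩ := Ideal.mem_span_singleton'.1 hym
  have hxF : (x:F) * (ϖ:F) = t * s⁻¹ := by
    have : ((x * ϖ : OF) : F) = ((y : OF) : F) := congrArg (fun z : OF => (z : F)) hx
    rw [hy] at this
    push_cast at this
    exact this
  have hcoef : (ϖ:F) * (x:F) * s = t := by
    have h := hxF
    field_simp at h
    linear_combination h
  have heq : u = (1 + ι (ϖ:F) * δ * ι (x:F)) * ι s := by
    have h5 : ι ((ϖ:F) * (x:F) * s) = ι t := congrArg ι hcoef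
    rw [map_mul, map_mul] at h5
    linear_combination hab - δ * h5
  refine ⟨x, ⟨s, ha, heq⟩, ?_⟩
  rintro x' ⟨f, hf, hfeq⟩
  have hf0 : f ≠ 0 := by
    intro h
    rw [h] at hf
    rw [show (0:F) - 1 = -1 by ring, Valuation.map_neg, map_one] at hf
    exact absurd hf (lt_irrefl 1)
  have e1 : ι f + ι ((ϖ:F)*(x':F)*f) * δ = ι s + ι ((ϖ:F)*(x:F)*s) * δ := by
    rw [map_mul, map_mul, map_mul, map_mul]
    linear_combination heq - hfeq
  obtain ⟨hfs, hts'⟩ := uniq _ _ _ _ e1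
  have hϖ0 : (ϖ:F) ≠ 0 := by
    intro h
    exact hϖ.ne_zero (by exact_mod_cast h)
  have hxx : (x':F) = (x:F) := by
    rw [hfs] at hts'
    have := mul_right_cancel₀ hs0 hts'
    exact mul_left_cancel₀ hϖ0 this
  exact Subtype.ext hxx
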